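/- Let X be a nondegenerate centered Gaussian vector in ℝ^n with correlation matrix R = {ρ_{ij}}. If for every 3 ≤ i ≤ n, E(X_i | X_1,...,X_{i-1}) = E(X_i | X_{i-1}) almost surely, then for all 1 ≤ k < l ≤ n, ρ_{kl} = ρ_{k,k+1} ρ_{k+1,k+2} ⋯ ρ_{l-1,l}. -/

import Mathlib

open Finset MeasureTheory ProbabilityTheory
open Matrix ENNReal

lemma quad_eq {n : ℕ} (M : Matrix (Fin n) (Fin n) ℝ) (x : Fin n → ℝ) :
    (∑ i, ∑ j, M i j * x i * x j) = x ⬝ᵥ M *ᵥ x := by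
  simp only [dotProduct, mulVec, Finset.mul_sum]
  exact Finset.sum_congr rfl fun i _ => Finset.sum_congr rfl fun j _ => by ring

lemma s_pos {n : ℕ} (C : Matrix (Fin n) (Fin n) ℝ) (hC : C.PosDef) {v : Fin n → ℝ} (hv : v ≠ 0) :
    0 < v ⬝ᵥ C *ᵥ v := by simpa using hC.dotProduct_mulVec_pos hv

lemma vecMulVec_mulVec' {n : ℕ} (w v x : Fin n → ℝ) : vecMulVec w v *ᵥ x = (v ⬝ᵥ x) • w := by
  ext i
  simp only [mulVec, vecMulVec, of_apply, dotProduct, Pi.smul_apply, smul_eq_mul, Finset.sum_mul]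
  exact Finset.sum_congr rfl fun j _ => by ring

lemma dot_symm {n : ℕ} (M : Matrix (Fin n) (Fin n) ℝ) (hM : Mᵀ = M) (a b : Fin n → ℝ) :
    a ⬝ᵥ M *ᵥ b = b ⬝ᵥ M *ᵥ a := by
  rw [dotProduct_mulVec, ← mulVec_transpose, hM, dotProduct_comm]

section Refl
variable {n : ℕ} {C : Matrix (Fin n) (Fin n) ℝ} (hC : C.PosDef) {v : Fin n → ℝ} (hv : v ≠ 0)

/-- reflection matrix -/
noncomputable def reflM (C : Matrix (Fin n) (Fin n) ℝ) (v : Fin n → ℝ) : Matrix (Fin n) (Fin n) ℝ :=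
  1 - (2 / (v ⬝ᵥ C *ᵥ v)) • vecMulVec (C *ᵥ v) v

lemma reflM_mulVec (x : Fin n → ℝ) :
    reflM C v *ᵥ x = x - ((2 / (v ⬝ᵥ C *ᵥ v)) * (v ⬝ᵥ x)) • (C *ᵥ v) := by
  rw [reflM, sub_mulVec, one_mulVec, smul_mulVec, vecMulVec_mulVec', smul_smul]

include hC hv in
lemma reflM_dot (x : Fin n → ℝ) : v ⬝ᵥ (reflM C v *ᵥ x) = -(v ⬝ᵥ x) := by
  have hs := (s_pos C hC hv).ne'
  rw [reflM_mulVec, dotProduct_sub, dotProduct_smul]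
  field_simp
  rw [smul_eq_mul, div_mul_cancel₀ _ hs]; ring

include hC hv in
lemma reflM_invol (x : Fin n → ℝ) : reflM C v *ᵥ (reflM C v *ᵥ x) = x := by
  have hs := (s_pos C hC hv).ne'
  rw [reflM_mulVec, reflM_dot hC hv, reflM_mulVec]
  ext i
  simp only [Pi.sub_apply, Pi.smul_apply, smul_eq_mul]
  field_simp
  ring

include hC hv in
lemma reflM_det : (reflM C v).det = -1 := by
  have hs := (s_pos C hC hv).ne'
  have : reflM C v = 1 + replicateCol Unit ((-(2 / (v ⬝ᵥ C *ᵥ v))) • (C *ᵥ v)) * replicateRow Unit v := by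
    ext i j
    simp [reflM, vecMulVec, Matrix.replicateCol, Matrix.replicateRow, Matrix.mul_apply, sub_eq_add_neg]
    ring
  rw [this, det_one_add_replicateCol_mul_replicateRow, dotProduct_smul]
  field_simp
  rw [smul_eq_mul, neg_mul, div_mul_cancel₀ _ hs]; ring

include hC hv in
lemma reflM_quad (x : Fin n → ℝ) :
    (reflM C v *ᵥ x) ⬝ᵥ C⁻¹ *ᵥ (reflM C v *ᵥ x) = x ⬝ᵥ C⁻¹ *ᵥ x := by
  have hs := (s_pos C hC hv).ne'
  have hMsym : (C⁻¹)ᵀ = C⁻¹ := by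
    rw [← conjTranspose_eq_transpose_of_trivial]; exact hC.inv.isHermitian
  have hCinv : C⁻¹ *ᵥ (C *ᵥ v) = v := by
    rw [mulVec_mulVec, nonsing_inv_mul C (isUnit_iff_ne_zero.mpr hC.det_pos.ne'), one_mulVec]
  rw [reflM_mulVec, mulVec_sub, mulVec_smul, hCinv]
  rw [sub_dotProduct, dotProduct_sub, dotProduct_sub, smul_dotProduct, dotProduct_smul,
    dotProduct_smul]
  simp only [smul_dotProduct, dotProduct_smul, smul_eq_mul]
  have h1 : (C *ᵥ v) ⬝ᵥ C⁻¹ *ᵥ x = v ⬝ᵥ x := by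
    rw [dot_symm _ hMsym, hCinv, dotProduct_comm]
  have h2 : x ⬝ᵥ v = v ⬝ᵥ x := dotProduct_comm _ _
  have h3 : (C *ᵥ v) ⬝ᵥ v = v ⬝ᵥ C *ᵥ v := dotProduct_comm _ _
  rw [h1, h2, h3]
  field_simp
  ring

end Refl

section Meas
variable {n : ℕ} {C : Matrix (Fin n) (Fin n) ℝ} (hC : C.PosDef) {v : Fin n → ℝ} (hv : v ≠ 0)

lemma measurable_mulVec (N : Matrix (Fin n) (Fin n) ℝ) :
    Measurable fun x : Fin n → ℝ => N *ᵥ x := by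
  refine measurable_pi_lambda _ fun i => ?_
  simp only [mulVec, dotProduct]
  exact Finset.measurable_sum _ fun j _ => by fun_prop

lemma contQ (M : Matrix (Fin n) (Fin n) ℝ) :
    Continuous fun x : Fin n → ℝ => ∑ i, ∑ j, M i j * x i * x j :=
  continuous_finset_sum _ fun i _ => continuous_finset_sum _ fun j _ =>
    (continuous_const.mul (continuous_apply i)).mul (continuous_apply j)

lemma measurable_dens (c : ℝ) (M : Matrix (Fin n) (Fin n) ℝ) :
    Measurable fun x : Fin n → ℝ =>
      ENNReal.ofReal (c * Real.exp (-(∑ i, ∑ j, M i j * x i * x j) / 2)) :=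
  ENNReal.measurable_ofReal.comp
    ((continuous_const.mul (Real.continuous_exp.comp (((contQ M).neg).div_const 2))).measurable)

end Meas

section Equiv
variable {n : ℕ} {C : Matrix (Fin n) (Fin n) ℝ} (hC : C.PosDef) {v : Fin n → ℝ} (hv : v ≠ 0)

/-- the reflection as a measurable equiv -/
noncomputable def reflE (hC : C.PosDef) (hv : v ≠ 0) : (Fin n → ℝ) ≃ᵐ (Fin n → ℝ) where
  toFun x := reflM C v *ᵥ x
  invFun x := reflM C v *ᵥ x
  left_inv x := reflM_invol hC hv x
  right_inv x := reflM_invol hC hv x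
  measurable_toFun := measurable_mulVec _
  measurable_invFun := measurable_mulVec _

lemma reflE_apply (x : Fin n → ℝ) : reflE hC hv x = reflM C v *ᵥ x := rfl

lemma volume_map_reflE : (volume : Measure (Fin n → ℝ)).map (reflE hC hv) = volume := by
  have hdet : (reflM C v).det ≠ 0 := by rw [reflM_det hC hv]; norm_num
  have h := Real.map_matrix_volume_pi_eq_smul_volume_pi hdet
  have hco : ⇑(Matrix.toLin' (reflM C v)) = ⇑(reflE hC hv) := funext fun x => Matrix.toLin'_apply _ _
  rw [hco] at h
  rw [h, reflM_det hC hv]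
  norm_num

lemma map_mu (μ : Measure (Fin n → ℝ)) (c : ℝ)
    (hμ : μ = volume.withDensity fun x => ENNReal.ofReal
      (c * Real.exp (-(∑ i, ∑ j, C⁻¹ i j * x i * x j) / 2))) :
    μ.map (reflE hC hv) = μ := by
  set f : (Fin n → ℝ) → ℝ≥0∞ := fun x => ENNReal.ofReal
      (c * Real.exp (-(∑ i, ∑ j, C⁻¹ i j * x i * x j) / 2)) with hf
  have hfm : Measurable f := measurable_dens c C⁻¹
  have hfe : ∀ x, f (reflE hC hv x) = f x := by
    intro x
    simp only [hf, reflE_apply, quad_eq]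
    rw [reflM_quad hC hv]
  rw [hμ]
  ext E hE
  rw [MeasurableEquiv.map_apply, withDensity_apply _ hE,
    withDensity_apply _ ((reflE hC hv).measurable hE)]
  have : ∫⁻ y in E, f y ∂volume = ∫⁻ y in E, f y ∂(volume.map (reflE hC hv)) := by
    rw [volume_map_reflE]
  rw [this, setLIntegral_map hE hfm (reflE hC hv).measurable]
  exact setLIntegral_congr_fun ((reflE hC hv).measurable hE) (fun x _ => (hfe x).symm)
end Equiv

section Integ
variable {n : ℕ}

lemma quad_lower {M : Matrix (Fin n) (Fin n) ℝ} (hM : M.PosDef) :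
    ∃ δ > 0, ∀ x : Fin n → ℝ, δ * ∑ k, x k ^ 2 ≤ x ⬝ᵥ M *ᵥ x := by
  classical
  obtain ⟨S, hSsym, hSS⟩ : ∃ S : Matrix (Fin n) (Fin n) ℝ, Sᵀ = S ∧ S * S = M := by
    open scoped MatrixOrder in
    refine ⟨CFC.sqrt M, ?_, CFC.sqrt_mul_sqrt_self M hM.posSemidef.nonneg⟩
    rw [← conjTranspose_eq_transpose_of_trivial]
    open scoped MatrixOrder in
    exact (CFC.sqrt_nonneg M).posSemidef.isHermitian
  have hdet : S.det ≠ 0 := by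
    intro h
    apply hM.det_pos.ne'
    rw [← hSS, det_mul, h, mul_zero]
  have key1 : ∀ x : Fin n → ℝ, x ⬝ᵥ M *ᵥ x = ∑ k, (S *ᵥ x) k ^ 2 := by
    intro x
    rw [← hSS, ← mulVec_mulVec, dot_symm S hSsym, dotProduct]
    exact Finset.sum_congr rfl fun k _ => (sq ((S *ᵥ x) k)).symm
  obtain ⟨T, hT⟩ : ∃ T, T = S⁻¹ := ⟨S⁻¹, rfl⟩
  have key3 : ∀ x : Fin n → ℝ, T *ᵥ (S *ᵥ x) = x := by
    intro x
    rw [hT, mulVec_mulVec, nonsing_inv_mul S (isUnit_iff_ne_zero.mpr hdet), one_mulVec]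
  set K := ∑ i, ∑ j, (T i j) ^ 2 with hK
  have hKnn : 0 ≤ K := Finset.sum_nonneg fun i _ => Finset.sum_nonneg fun j _ => sq_nonneg _
  refine ⟨(K + 1)⁻¹, by positivity, fun x => ?_⟩
  have key2 : ∑ k, x k ^ 2 ≤ K * ∑ k, (S *ᵥ x) k ^ 2 := by
    conv_lhs => rw [← key3 x]
    rw [hK, Finset.sum_mul]
    refine Finset.sum_le_sum fun i _ => ?_
    calc (T *ᵥ (S *ᵥ x)) i ^ 2 = (∑ j, T i j * (S *ᵥ x) j) ^ 2 := by
          simp [mulVec, dotProduct]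
      _ ≤ (∑ j, (T i j) ^ 2) * ∑ j, (S *ᵥ x) j ^ 2 :=
          Finset.sum_mul_sq_le_sq_mul_sq Finset.univ (fun j => T i j) (fun j => (S *ᵥ x) j)
  have hQnn : 0 ≤ ∑ k, (S *ᵥ x) k ^ 2 := Finset.sum_nonneg fun k _ => sq_nonneg _
  rw [key1, inv_mul_le_iff₀ (by positivity)]
  calc ∑ k, x k ^ 2 ≤ K * ∑ k, (S *ᵥ x) k ^ 2 := key2
    _ ≤ (K + 1) * ∑ k, (S *ᵥ x) k ^ 2 := by nlinarith
end Integ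

section Integ2
variable {n : ℕ} {C : Matrix (Fin n) (Fin n) ℝ} (hC : C.PosDef)

include hC in
lemma integrable_coord (μ : Measure (Fin n → ℝ)) (c : ℝ) (hc : 0 ≤ c)
    (hμ : μ = volume.withDensity fun x => ENNReal.ofReal
      (c * Real.exp (-(∑ i, ∑ j, C⁻¹ i j * x i * x j) / 2)))
    (m : Fin n) : Integrable (fun x => x m) μ := by
  classical
  obtain ⟨δ, hδ, hlow⟩ := quad_lower hC.inv
  have hnn : ∀ x : Fin n → ℝ, 0 ≤ c * Real.exp (-(∑ i, ∑ j, C⁻¹ i j * x i * x j) / 2) :=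
    fun x => mul_nonneg hc (Real.exp_pos _).le
  rw [hμ, integrable_withDensity_iff (measurable_dens c C⁻¹)
    (Filter.Eventually.of_forall fun x => ENNReal.ofReal_lt_top)]
  have hmain : Integrable
      (fun x : Fin n → ℝ => x m * (c * Real.exp (-(∑ i, ∑ j, C⁻¹ i j * x i * x j) / 2)))
      volume := by
    set φ : Fin n → ℝ → ℝ :=
      fun k t => (if k = m then |t| else 1) * Real.exp (-(δ/2) * t ^ 2) with hφ
    have hφint : ∀ k, Integrable (φ k) volume := by
      intro k
      by_cases hk : k = m
      · have := (integrable_mul_exp_neg_mul_sq (b := δ/2) (by positivity)).abs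
        refine this.congr (Filter.Eventually.of_forall fun t => ?_)
        simp [hφ, hk, abs_mul, abs_of_nonneg (Real.exp_pos _).le]
      · simp only [hφ, if_neg hk, one_mul]
        exact integrable_exp_neg_mul_sq (by positivity)
    have hprod : Integrable (fun x : Fin n → ℝ => c * ∏ k, φ k (x k)) volume :=
      (Integrable.fintype_prod (𝕜 := ℝ) hφint).const_mul c
    refine hprod.mono ?_ (Filter.Eventually.of_forall fun x => ?_)
    · exact ((continuous_apply m).mul (continuous_const.mul
        (Real.continuous_exp.comp (((contQ C⁻¹).neg).div_const 2)))).aestronglyMeasurable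
    · have hexp : Real.exp (-(∑ i, ∑ j, C⁻¹ i j * x i * x j) / 2)
          ≤ ∏ k, Real.exp (-(δ/2) * (x k) ^ 2) := by
        rw [← Real.exp_sum]
        apply Real.exp_le_exp.2
        have h1 := hlow x
        rw [← quad_eq] at h1
        have : ∑ k, -(δ/2) * (x k) ^ 2 = -(δ * ∑ k, (x k) ^ 2) / 2 := by
          rw [← Finset.mul_sum]; ring
        rw [this]
        linarith
      have hprodφ : ∏ k, φ k (x k) = |x m| * ∏ k, Real.exp (-(δ/2) * (x k) ^ 2) := by
        rw [hφ]
        rw [Finset.prod_mul_distrib]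
        congr 1
        simp [Finset.prod_ite_eq']
      rw [Real.norm_eq_abs, Real.norm_eq_abs, abs_mul, abs_of_nonneg (hnn x), abs_mul,
        abs_of_nonneg (by positivity : (0:ℝ) ≤ ∏ k, φ k (x k)), hprodφ]
      calc |x m| * (c * Real.exp (-(∑ i, ∑ j, C⁻¹ i j * x i * x j) / 2))
          ≤ |x m| * (c * ∏ k, Real.exp (-(δ/2) * (x k) ^ 2)) := by
            apply mul_le_mul_of_nonneg_left _ (abs_nonneg _)
            exact mul_le_mul_of_nonneg_left hexp hc
        _ = |c| * (|x m| * ∏ k, Real.exp (-(δ/2) * (x k) ^ 2)) := by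
            rw [abs_of_nonneg hc]; ring
  refine hmain.congr (Filter.Eventually.of_forall fun x => ?_)
  simp only [ENNReal.toReal_ofReal (hnn x)]
end Integ2

section Crux
variable {n : ℕ} {C : Matrix (Fin n) (Fin n) ℝ} (hC : C.PosDef)

include hC in
lemma diag_pos' (j : Fin n) : 0 < C j j := by
  have h := hC.dotProduct_mulVec_pos (x := Pi.single j 1) (by
    intro h; have := congrFun h j; simp at this)
  simpa [single_dotProduct, mulVec_single] using h

include hC in
lemma Csymm (a b : Fin n) : C a b = C b a := by
  have := hC.isHermitian
  rw [Matrix.IsHermitian] at this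
  conv_lhs => rw [← this]
  simp [Matrix.conjTranspose_apply]

include hC in
lemma crux (μ : Measure (Fin n → ℝ)) [IsProbabilityMeasure μ] (c : ℝ) (hc : 0 ≤ c)
    (hμ : μ = volume.withDensity fun x => ENNReal.ofReal
      (c * Real.exp (-(∑ i, ∑ j, C⁻¹ i j * x i * x j) / 2)))
    (m j : Fin n) :
    (fun x => (C m j / C j j) * x j)
      =ᵐ[μ] μ[(fun x => x m) | MeasurableSpace.comap (fun x => x j) inferInstance] := by
  classical
  have hm : MeasurableSpace.comap (fun x : Fin n → ℝ => x j) inferInstance ≤ _ :=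
    (measurable_pi_apply j).comap_le
  have hint : ∀ a : Fin n, Integrable (fun x => x a) μ := integrable_coord hC μ c hc hμ
  have hmeasj : Measurable[MeasurableSpace.comap (fun x : Fin n → ℝ => x j) inferInstance]
      (fun x : Fin n → ℝ => x j) := measurable_iff_comap_le.mpr le_rfl
  by_cases hmj : m = j
  · subst hmj
    have hCjj : C m m ≠ 0 := (diag_pos' hC m).ne'
    have heq : (fun x : Fin n → ℝ => (C m m / C m m) * x m) = fun x => x m := by
      funext x; rw [div_self hCjj, one_mul]
    rw [heq, condExp_of_stronglyMeasurable hm hmeasj.stronglyMeasurable (hint m)]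
  · set β := C m j / C j j with hβ
    set v : Fin n → ℝ := (Pi.single m 1 : Fin n → ℝ) - β • (Pi.single j 1 : Fin n → ℝ) with hvdef
    have hv : v ≠ 0 := by
      intro h
      have := congrFun h m
      simp [hvdef, Pi.single_apply, hmj, Ne.symm hmj] at this
    have hdotv : ∀ x : Fin n → ℝ, v ⬝ᵥ x = x m - β * x j := by
      intro x
      simp [hvdef, sub_dotProduct, smul_dotProduct, single_dotProduct]
    have hwj : (C *ᵥ v) j = 0 := by
      simp only [hvdef, mulVec_sub, mulVec_smul, mulVec_single]
      simp [Csymm hC j m, hβ, div_mul_cancel₀, (diag_pos' hC j).ne']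
    have hmap : μ.map (reflE hC hv) = μ := map_mu hC hv μ c hμ
    have hfix : ∀ x : Fin n → ℝ, (reflE hC hv x) j = x j := by
      intro x
      rw [reflE_apply, reflM_mulVec]
      simp [hwj]
    refine ae_eq_condExp_of_forall_setIntegral_eq hm (hint m) ?_ ?_ ?_
    · intro s _ _
      exact (((hint j).const_mul β).integrableOn)
    · intro s hs _
      obtain ⟨B, hB, rfl⟩ := MeasurableSpace.measurableSet_comap.mp hs
      set s : Set (Fin n → ℝ) := (fun x => x j) ⁻¹' B with hsdef
      have hpre : (reflE hC hv) ⁻¹' s = s := by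
        ext x
        simp only [Set.mem_preimage, hsdef, hfix x]
      have I0 : ∫ x in s, v ⬝ᵥ x ∂μ = 0 := by
        have h1 : ∫ x in s, v ⬝ᵥ x ∂μ = ∫ x in s, v ⬝ᵥ (reflE hC hv x) ∂μ := by
          conv_lhs => rw [← hmap]
          rw [setIntegral_map_equiv, hpre]
        have h2 : ∫ x in s, v ⬝ᵥ (reflE hC hv x) ∂μ = - ∫ x in s, v ⬝ᵥ x ∂μ := by
          rw [← integral_neg]
          refine setIntegral_congr_fun (hm _ hs) fun x _ => ?_
          rw [reflE_apply, reflM_dot hC hv]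
        rw [h2] at h1
        linarith
      have I1 : ∫ x in s, (x m - β * x j) ∂μ = 0 := by
        rw [← I0]
        exact setIntegral_congr_fun (hm _ hs) fun x _ => (hdotv x).symm
      rw [integral_sub ((hint m).integrableOn) (((hint j).const_mul β).integrableOn)] at I1
      linarith
    · exact ((hmeasj.const_mul β).stronglyMeasurable).aestronglyMeasurable
end Crux

section Final
variable {n : ℕ}

lemma scalar_cancel (μ : Measure (Fin n → ℝ)) [IsProbabilityMeasure μ]
    (f : (Fin n → ℝ) → ℝ≥0∞) (hμ : μ = volume.withDensity f) (m : Fin n) {a b : ℝ}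
    (h : (fun x => a * x m) =ᵐ[μ] fun x => b * x m) : a = b := by
  classical
  by_contra hab
  have hae : ∀ᵐ x ∂μ, x m = 0 := by
    filter_upwards [h] with x hx
    have h0 : (a - b) * x m = 0 := by
      have : a * x m = b * x m := hx
      nlinarith [this]
    rcases mul_eq_zero.mp h0 with h' | h'
    · exact absurd (sub_eq_zero.mp h') hab
    · exact h'
  have h1 : μ {x : Fin n → ℝ | x m = 0} = 0 := by
    have hset : {x : Fin n → ℝ | x m = 0} =
        Set.pi Set.univ (fun k => if k = m then ({0} : Set ℝ) else Set.univ) := by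
      ext x
      simp only [Set.mem_setOf_eq, Set.mem_pi, Set.mem_univ, forall_true_left]
      constructor
      · intro hx k
        by_cases hk : k = m
        · subst hk; simp [hx]
        · simp [hk]
      · intro hx
        have := hx m
        simpa using this
    have hvol : (volume : Measure (Fin n → ℝ)) {x | x m = 0} = 0 := by
      rw [hset, volume_pi_pi]
      refine Finset.prod_eq_zero (Finset.mem_univ m) ?_
      simp
    rw [hμ]
    exact withDensity_absolutelyContinuous _ _ hvol
  have h2 : μ ({x : Fin n → ℝ | x m = 0}ᶜ) = 0 := by
    rw [Set.compl_setOf]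
    exact hae
  have hle := measure_union_le (μ := μ) {x : Fin n → ℝ | x m = 0} {x : Fin n → ℝ | x m = 0}ᶜ
  rw [Set.union_compl_self, measure_univ, h1, h2, add_zero] at hle
  simp at hle

lemma measurable_trunc (l : Fin n) :
    Measurable (fun x (j : Fin n) => if (j : ℕ) < (l : ℕ) then x j else 0 : (Fin n → ℝ) → Fin n → ℝ) := by
  refine measurable_pi_lambda _ fun j => ?_
  by_cases h : (j : ℕ) < (l : ℕ)
  · simp only [h, if_true]
    exact measurable_pi_apply j
  · simp only [h, if_false]
    exact measurable_const

lemma Gm_le_F (l m : Fin n) (hml : (m : ℕ) < (l : ℕ)) :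
    MeasurableSpace.comap (fun x : Fin n → ℝ => x m) inferInstance ≤
      MeasurableSpace.comap (fun x (j : Fin n) => if (j : ℕ) < (l : ℕ) then x j else 0)
        inferInstance := by
  have hfun : (fun x : Fin n → ℝ => x m) = (fun y : Fin n → ℝ => y m) ∘
      (fun x (j : Fin n) => if (j : ℕ) < (l : ℕ) then x j else 0) := by
    funext x; exact (if_pos hml).symm
  rw [hfun, ← MeasurableSpace.comap_comp]
  exact MeasurableSpace.comap_mono (measurable_pi_apply m).comap_le
end Final

lemma ratio_alg {ckk cjj cll ckl ckj cjl : ℝ}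
    (ha : 0 < Real.sqrt ckk) (hb : 0 < Real.sqrt cjj) (hd : 0 < Real.sqrt cll)
    (hb2 : Real.sqrt cjj * Real.sqrt cjj = cjj)
    (hrel : ckl * cjj = cjl * ckj) :
    ckl / (Real.sqrt ckk * Real.sqrt cll)
      = ckj / (Real.sqrt ckk * Real.sqrt cjj) * (cjl / (Real.sqrt cjj * Real.sqrt cll)) := by
  set a := Real.sqrt ckk
  set b := Real.sqrt cjj
  set d := Real.sqrt cll
  field_simp
  linear_combination hrel + ckl * hb2

/-- For a nondegenerate centered Gaussian measure on `ℝ^n` with covariance `C` and correlation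
coefficients `ρ i j`, if `E(X_i | X_0,…,X_{i-1}) = E(X_i | X_{i-1})` a.s. for all `i ≥ 2`
(0-based indices), then `ρ k l` is the product of the consecutive correlation coefficients
`ρcons j = ρ j (j+1)` for `k ≤ j < l`. -/
theorem stmt12 (n : ℕ) (C : Matrix (Fin n) (Fin n) ℝ) (hC : C.PosDef)
    (μ : Measure (Fin n → ℝ)) [IsProbabilityMeasure μ]
    (hμ : μ = volume.withDensity fun x => ENNReal.ofReal
      ((Real.sqrt ((2 * Real.pi) ^ n * C.det))⁻¹ *
        Real.exp (-(∑ i, ∑ j, C⁻¹ i j * x i * x j) / 2)))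
    (ρ : Fin n → Fin n → ℝ)
    (hρ : ∀ i j : Fin n, ρ i j = C i j / (Real.sqrt (C i i) * Real.sqrt (C j j)))
    (ρcons : ℕ → ℝ)
    (hcons : ∀ (j : ℕ) (h : j + 1 < n), ρcons j = ρ ⟨j, by omega⟩ ⟨j + 1, h⟩)
    (hcond : ∀ i : Fin n, 2 ≤ (i : ℕ) →
      μ[(fun x => x i) |
          MeasurableSpace.comap (fun x (j : Fin n) => if (j : ℕ) < (i : ℕ) then x j else 0)
            inferInstance]
        =ᵐ[μ]
      μ[(fun x => x i) |
          MeasurableSpace.comap (fun x => x ⟨(i : ℕ) - 1, by have := i.isLt; omega⟩)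
            inferInstance]) :
    ∀ k l : Fin n, (k : ℕ) < (l : ℕ) →
      ρ k l = ∏ j ∈ Finset.Ico (k : ℕ) (l : ℕ), ρcons j := by
  classical
  intro k l hkl
  set c : ℝ := (Real.sqrt ((2 * Real.pi) ^ n * C.det))⁻¹ with hcdef
  have hc0 : 0 ≤ c := inv_nonneg.2 (Real.sqrt_nonneg _)
  have key : ∀ (lv : ℕ) (hlv : lv < n) (m : Fin n), (m : ℕ) + 1 < lv →
      C ⟨lv, hlv⟩ m * C ⟨lv - 1, by omega⟩ ⟨lv - 1, by omega⟩
        = C ⟨lv, hlv⟩ ⟨lv - 1, by omega⟩ * C ⟨lv - 1, by omega⟩ m := by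
    intro lv hlv m hm
    set l' : Fin n := ⟨lv, hlv⟩ with hl'
    set j' : Fin n := ⟨lv - 1, by omega⟩ with hj'
    have h2l : 2 ≤ (l' : ℕ) := by simp [hl']; omega
    have hml : (m : ℕ) < (l' : ℕ) := by simp [hl']; omega
    have hcnd := hcond l' h2l
    have hβ := crux hC μ c hc0 hμ l' j'
    have t1 : μ[(fun x => x l') | MeasurableSpace.comap (fun x : Fin n → ℝ => x m) inferInstance]
        =ᵐ[μ] μ[μ[(fun x => x l') |
            MeasurableSpace.comap (fun x (j : Fin n) => if (j : ℕ) < (l' : ℕ) then x j else 0)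
              inferInstance] |
          MeasurableSpace.comap (fun x : Fin n → ℝ => x m) inferInstance] :=
      (condExp_condExp_of_le (Gm_le_F l' m hml) (measurable_trunc l').comap_le).symm
    have t2 := condExp_congr_ae
      (m := MeasurableSpace.comap (fun x : Fin n → ℝ => x m) inferInstance) hcnd
    have t3 := condExp_congr_ae
      (m := MeasurableSpace.comap (fun x : Fin n → ℝ => x m) inferInstance) hβ.symm
    have t4 : μ[(fun x => (C l' j' / C j' j') * x j') |
          MeasurableSpace.comap (fun x : Fin n → ℝ => x m) inferInstance]
        =ᵐ[μ] fun x => ((C l' j' / C j' j') * (C j' m / C m m)) * x m := by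
      have hsm : (fun x : Fin n → ℝ => (C l' j' / C j' j') * x j')
          = (C l' j' / C j' j') • (fun x : Fin n → ℝ => x j') := by
        funext x; simp [smul_eq_mul]
      rw [hsm]
      refine (condExp_smul _ _ _).trans ?_
      filter_upwards [(crux hC μ c hc0 hμ j' m).symm] with x hx
      simp only [Pi.smul_apply, smul_eq_mul, hx]
      ring
    have t5 := crux hC μ c hc0 hμ l' m
    have hchain := t5.trans (t1.trans (t2.trans (t3.trans t4)))
    have hsc : C l' m / C m m = (C l' j' / C j' j') * (C j' m / C m m) :=
      scalar_cancel μ _ hμ m hchain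
    have hCmm := (diag_pos' hC m).ne'
    have hCjj := (diag_pos' hC j').ne'
    field_simp at hsc
    -- expect hsc in cleared-denominator form; finish by cancelling C m m
    have hgoal : C l' m * C j' j' * C m m = C l' j' * C j' m * C m m := by
      rw [hsc]
    have := mul_right_cancel₀ hCmm hgoal
    linarith [this]
  have main : ∀ lv, (k : ℕ) + 1 ≤ lv → ∀ h2 : lv < n,
      ρ k ⟨lv, h2⟩ = ∏ j ∈ Finset.Ico (k : ℕ) lv, ρcons j := by
    refine Nat.le_induction ?_ ?_
    · intro h2
      rw [Nat.Ico_succ_singleton, Finset.prod_singleton, hcons (k : ℕ) h2, Fin.eta]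
    · intro lv hlv IH h2
      have hlv' : lv < n := by omega
      rw [Finset.prod_Ico_succ_top (by omega : (k : ℕ) ≤ lv), ← IH hlv',
        hcons lv h2]
      have hk := key (lv + 1) h2 k (by omega)
      have hsymm := Csymm hC
      have ha := Real.sqrt_pos.mpr (diag_pos' hC k)
      have hb := Real.sqrt_pos.mpr (diag_pos' hC ⟨lv, hlv'⟩)
      have hd := Real.sqrt_pos.mpr (diag_pos' hC ⟨lv + 1, h2⟩)
      have hb2 : Real.sqrt (C ⟨lv, hlv'⟩ ⟨lv, hlv'⟩) * Real.sqrt (C ⟨lv, hlv'⟩ ⟨lv, hlv'⟩)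
          = C ⟨lv, hlv'⟩ ⟨lv, hlv'⟩ := Real.mul_self_sqrt (diag_pos' hC ⟨lv, hlv'⟩).le
      rw [hρ, hρ, hρ]
      have hrel : C k ⟨lv + 1, h2⟩ * C ⟨lv, hlv'⟩ ⟨lv, hlv'⟩
          = C ⟨lv, hlv'⟩ ⟨lv + 1, h2⟩ * C k ⟨lv, hlv'⟩ := by
        have hk' : C ⟨lv + 1, h2⟩ k * C ⟨lv, hlv'⟩ ⟨lv, hlv'⟩
            = C ⟨lv + 1, h2⟩ ⟨lv, hlv'⟩ * C ⟨lv, hlv'⟩ k := hk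
        rw [hsymm ⟨lv + 1, h2⟩ k, hsymm ⟨lv + 1, h2⟩ ⟨lv, hlv'⟩, hsymm ⟨lv, hlv'⟩ k] at hk'
        exact hk'
      exact ratio_alg ha hb hd hb2 hrel
  have := main (l : ℕ) hkl l.isLt
  rwa [Fin.eta] at this
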